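/- Assume γ ≡ 0 and let η be a positive martingale on [0,T] with E[∫_0^T η_t^{1-q} dt] < ∞ and E[η_T^2] < ∞. Then for every initial value ξ ∈ ℝ the control with constant closure rate x_t = ξ·(1 − t/T) is admissible and optimal: J(x) ≤ J(y) for every y ∈ A_0(ξ), and J(x) = |ξ|^p·E[η_0]·T^{1-p}. -/

import Mathlib

open MeasureTheory Set
open scoped ENNReal Classical

noncomputable section

/-- The cost functional `J(x) = E[∫_0^T (η_t |u_t|^p + γ_t |x_t|^p) dt]`, valued in `[0,∞]`,
where `u` is the pathwise derivative of the control `x`. -/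
def cost {Ω : Type*} [MeasurableSpace Ω] (P : Measure Ω) (T p : ℝ)
    (η γ : ℝ → Ω → ℝ) (x u : ℝ → Ω → ℝ) : ℝ≥0∞ :=
  ∫⁻ ω, (∫⁻ t in Set.Ioc (0 : ℝ) T,
    ENNReal.ofReal (η t ω * |u t ω| ^ p + γ t ω * |x t ω| ^ p)) ∂P

/-- `x` is a control with initial value `ξ` and (pathwise) derivative `u`:
`x` and `u` are progressively measurable, the paths of `x` are absolutely continuous with
`x_t = ξ + ∫_0^t u_s ds` on `[0,T]`. -/
def IsControl {Ω : Type*} {m0 : MeasurableSpace Ω} (ℱ : Filtration ℝ m0)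
    (T ξ : ℝ) (x u : ℝ → Ω → ℝ) : Prop :=
  ProgMeasurable ℱ u ∧ ProgMeasurable ℱ x ∧
  (∀ ω, IntegrableOn (fun s => u s ω) (Set.Icc 0 T)) ∧
  (∀ ω, ∀ t ∈ Set.Icc (0 : ℝ) T, x t ω = ξ + ∫ s in (0 : ℝ)..t, u s ω)

/-- An admissible control: a control with initial value `ξ` satisfying `x_T = 0` a.s. -/
def IsAdmissible {Ω : Type*} {m0 : MeasurableSpace Ω} (ℱ : Filtration ℝ m0)
    (P : Measure Ω) (T ξ : ℝ) (x u : ℝ → Ω → ℝ) : Prop :=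
  IsControl ℱ T ξ x u ∧ ∀ᵐ ω ∂P, x T ω = 0

section Aux

variable {Ω : Type*} {m0 : MeasurableSpace Ω}

/-- A measurable version of a progressively measurable process, as a function on `Ω × ℝ`. -/
theorem MeasureTheory.ProgMeasurable.measurable_min {ℱ : Filtration ℝ m0} {f : ℝ → Ω → ℝ}
    (hf : ProgMeasurable ℱ f) (T : ℝ) :
    Measurable fun z : Ω × ℝ => f (min z.2 T) z.1 := by
  have h1 : Measurable fun z : Ω × ℝ => (⟨min z.2 T, mem_Iic.mpr (min_le_right _ _)⟩ : Iic T) :=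
    (measurable_snd.min measurable_const).subtype_mk
  have h2 : @Measurable (Ω × ℝ) Ω _ (ℱ T) Prod.fst := measurable_fst.mono le_rfl (ℱ.le T)
  have hψ : @Measurable (Ω × ℝ) (↥(Iic T) × Ω) _
      (Subtype.instMeasurableSpace.prod (ℱ T))
      (fun z : Ω × ℝ => ((⟨min z.2 T, mem_Iic.mpr (min_le_right _ _)⟩ : Iic T), z.1)) :=
    @Measurable.prod _ _ _ _ _ (ℱ T) _ h1 h2
  exact ((hf T).comp_measurable hψ).measurable

theorem ae_snd_mem_Ioc (P : Measure Ω) [SFinite P] (a b : ℝ) :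
    ∀ᵐ z : Ω × ℝ ∂(P.prod (volume.restrict (Ioc a b))), z.2 ∈ Ioc a b := by
  rw [MeasureTheory.ae_iff]
  have hs : {z : Ω × ℝ | ¬ z.2 ∈ Ioc a b} = univ ×ˢ (Ioc a b)ᶜ := by
    ext z; simp
  rw [hs, Measure.prod_prod, Measure.restrict_apply measurableSet_Ioc.compl]
  simp

/-- Joint a.e.-measurability of a progressively measurable process on the product space. -/
theorem MeasureTheory.ProgMeasurable.aemeasurable_prod {ℱ : Filtration ℝ m0} {f : ℝ → Ω → ℝ}
    (hf : ProgMeasurable ℱ f) (P : Measure Ω) [SFinite P] {T : ℝ} :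
    AEMeasurable (fun z : Ω × ℝ => f z.2 z.1)
      (P.prod (volume.restrict (Ioc (0 : ℝ) T))) := by
  refine ((hf.measurable_min T).aemeasurable).congr ?_
  filter_upwards [ae_snd_mem_Ioc P 0 T] with z hz
  rw [min_eq_left hz.2]

/-- If two nonnegative integrable functions have the same integrals on all sets of a
sub-σ-algebra `m`, then weighting any `m`-measurable `ℝ≥0∞`-valued function by either gives the
same lintegral. -/
theorem lintegral_mul_congr_of_setIntegral_eq' {Ω : Type*} {m m0 : MeasurableSpace Ω}
    (hle : m ≤ m0) (P : Measure Ω) {g h : Ω → ℝ}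
    (hgm : Measurable g) (hhm : Measurable h)
    (hg : Integrable g P) (hh : Integrable h P)
    (hgnn : 0 ≤ᵐ[P] g) (hhnn : 0 ≤ᵐ[P] h)
    (hset : ∀ A, MeasurableSet[m] A → ∫ ω in A, g ω ∂P = ∫ ω in A, h ω ∂P)
    {f : Ω → ℝ≥0∞} (hfm : Measurable[m] f) :
    ∫⁻ ω, ENNReal.ofReal (g ω) * f ω ∂P = ∫⁻ ω, ENNReal.ofReal (h ω) * f ω ∂P := by
  have hwd : ∀ g' : Ω → ℝ, Measurable g' →
      ∫⁻ ω, f ω ∂((P.withDensity fun ω => ENNReal.ofReal (g' ω)).trim hle)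
        = ∫⁻ ω, ENNReal.ofReal (g' ω) * f ω ∂P := by
    intro g' hg'm
    rw [lintegral_trim hle hfm,
      lintegral_withDensity_eq_lintegral_mul P hg'm.ennreal_ofReal (hfm.mono hle le_rfl)]
    rfl
  rw [← hwd g hgm, ← hwd h hhm]
  congr 1
  refine @Measure.ext Ω m _ _ fun A hA => ?_
  rw [trim_measurableSet_eq hle hA, trim_measurableSet_eq hle hA,
    withDensity_apply _ (hle _ hA), withDensity_apply _ (hle _ hA),
    ← ofReal_integral_eq_lintegral_ofReal hg.integrableOn (ae_restrict_of_ae hgnn),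
    ← ofReal_integral_eq_lintegral_ofReal hh.integrableOn (ae_restrict_of_ae hhnn),
    hset A hA]

/-- Tangent-line inequality for the convex function `v ↦ |v| ^ p`. -/
theorem tangent_line_abs_rpow {p q : ℝ} (hpq : Real.HolderConjugate p q) (c v : ℝ) :
    |c| ^ p + p * |c| ^ (p - 1) * Real.sign c * (v - c) ≤ |v| ^ p := by
  rcases eq_or_ne c 0 with rfl | hc
  · simp only [abs_zero, Real.sign_zero, Real.zero_rpow hpq.ne_zero, mul_zero, zero_mul,
      zero_add, sub_zero]
    positivity
  · have habs : 0 < |c| := abs_pos.2 hc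
    have hsc : Real.sign c * c = |c| := by
      rcases hc.lt_or_gt with h | h
      · rw [Real.sign_of_neg h, abs_of_neg h]; ring
      · rw [Real.sign_of_pos h, abs_of_pos h]; ring
    have hsv : Real.sign c * v ≤ |v| := by
      rcases hc.lt_or_gt with h | h
      · rw [Real.sign_of_neg h]
        simpa using neg_le_abs v
      · rw [Real.sign_of_pos h, one_mul]
        exact le_abs_self v
    have hyoung : |v| * |c| ^ (p - 1) ≤ |v| ^ p / p + (|c| ^ (p - 1)) ^ q / q :=
      Real.young_inequality_of_nonneg (abs_nonneg v) (Real.rpow_nonneg (abs_nonneg c) _) hpq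
    have hcpq : (|c| ^ (p - 1)) ^ q = |c| ^ p := by
      rw [← Real.rpow_mul (abs_nonneg c)]
      congr 1
      rw [hpq.conjugate_eq]
      field_simp
      exact mul_div_cancel_right₀ _ hpq.sub_one_ne_zero
    have hsplit : |c| ^ (p - 1) * |c| = |c| ^ p := by
      nth_rewrite 2 [← Real.rpow_one |c|]
      rw [← Real.rpow_add habs]
      ring_nf
    have hpq' : p / q = p - 1 := by
      rw [hpq.conjugate_eq]
      field_simp
      exact mul_div_cancel_left₀ _ hpq.ne_zero
    have hBnn : 0 ≤ |c| ^ (p - 1) := Real.rpow_nonneg (abs_nonneg c) _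
    have h1 : p * |c| ^ (p - 1) * (Real.sign c * v) ≤ p * |c| ^ (p - 1) * |v| :=
      mul_le_mul_of_nonneg_left hsv (mul_nonneg hpq.nonneg hBnn)
    have h2 : p * (|v| * |c| ^ (p - 1)) ≤ |v| ^ p + (p - 1) * |c| ^ p := by
      have h3 := mul_le_mul_of_nonneg_left hyoung hpq.pos.le
      rw [hcpq] at h3
      have hq0 : q ≠ 0 := hpq.symm.ne_zero
      have hp0' : p ≠ 0 := hpq.ne_zero
      calc p * (|v| * |c| ^ (p - 1)) ≤ p * (|v| ^ p / p + |c| ^ p / q) := h3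
        _ = |v| ^ p + (p / q) * |c| ^ p := by
            field_simp
        _ = |v| ^ p + (p - 1) * |c| ^ p := by rw [hpq']
    have hexp : |c| ^ p + p * |c| ^ (p - 1) * Real.sign c * (v - c)
        = |c| ^ p + p * |c| ^ (p - 1) * (Real.sign c * v)
          - p * (|c| ^ (p - 1) * (Real.sign c * c)) := by
      ring
    rw [hexp, hsc, hsplit]
    nlinarith [h1, h2]

theorem ofReal_max_zero (x : ℝ) : ENNReal.ofReal (max x 0) = ENNReal.ofReal x := by
  rcases le_total x 0 with h | h
  · rw [max_eq_right h, ENNReal.ofReal_zero, eq_comm, ENNReal.ofReal_eq_zero]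
    exact h
  · rw [max_eq_left h]

end Aux

/-- with `γ ≡ 0` and `η` a positive martingale on `[0,T]` with
`E[∫_0^T η_t^{1-q} dt] < ∞` and `E[η_T^2] < ∞`, for every `ξ ∈ ℝ` the control with
constant closure rate `x_t = ξ·(1 − t/T)` is admissible and optimal, with
`J(x) = |ξ|^p·E[η_0]·T^{1-p}`. -/
theorem linear_closure_optimal_for_martingale
    {Ω : Type*} {m0 : MeasurableSpace Ω} (P : Measure Ω) [IsProbabilityMeasure P]
    (ℱ : Filtration ℝ m0) (T p q : ℝ) (hT : 0 < T) (hp : 1 < p) (hq : q = p / (p - 1))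
    (η γ : ℝ → Ω → ℝ) (hηprog : ProgMeasurable ℱ η)
    (hγ0 : ∀ t ω, γ t ω = 0)
    (hpos : ∀ t ω, 0 < η t ω)
    (hint : ∀ t, 0 ≤ t → t ≤ T → Integrable (η t) P)
    (hmart : ∀ s t, 0 ≤ s → s ≤ t → t ≤ T → P[η t | ℱ s] =ᵐ[P] η s)
    (hηq : ∫⁻ ω, (∫⁻ t in Set.Ioc (0 : ℝ) T, ENNReal.ofReal (η t ω ^ (1 - q))) ∂P < ⊤)
    (hηT : ∫⁻ ω, ENNReal.ofReal ((η T ω) ^ 2) ∂P < ⊤)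
    (ξ : ℝ) (x u : ℝ → Ω → ℝ)
    (hxdef : ∀ t ω, x t ω = ξ * (1 - t / T))
    (hudef : ∀ t ω, u t ω = -(ξ / T)) :
    IsAdmissible ℱ P T ξ x u ∧
    (∀ y w, IsAdmissible ℱ P T ξ y w → cost P T p η γ x u ≤ cost P T p η γ y w) ∧
    cost P T p η γ x u = ENNReal.ofReal (|ξ| ^ p * (∫ ω, η 0 ω ∂P) * T ^ (1 - p)) := by
  have hpq : Real.HolderConjugate p q := by
    rw [hq]; exact Real.HolderConjugate.conjExponent hp
  have hp0 : (0 : ℝ) < p := hpq.pos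
  set R0 : ℝ := ∫ ω, η 0 ω ∂P with hR0
  have hR0nn : 0 ≤ R0 := integral_nonneg fun ω => (hpos 0 ω).le
  have hηm : ∀ t, Measurable (η t) := fun t =>
    ((IsStronglyProgressive.stronglyAdapted hηprog t).measurable).mono (ℱ.le t) le_rfl
  -- the expectation of the martingale is constant
  have hEt : ∀ t, 0 ≤ t → t ≤ T → ∫ ω, η t ω ∂P = R0 := by
    intro t h0 h1
    have hce := hmart 0 t le_rfl h0 h1
    calc ∫ ω, η t ω ∂P = ∫ ω, (P[η t | ℱ 0]) ω ∂P :=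
          (integral_condExp (ℱ.le 0)).symm
      _ = R0 := integral_congr_ae hce
  have hlEt : ∀ t, 0 ≤ t → t ≤ T → ∫⁻ ω, ENNReal.ofReal (η t ω) ∂P = ENNReal.ofReal R0 := by
    intro t h0 h1
    rw [← ofReal_integral_eq_lintegral_ofReal (hint t h0 h1)
      (Filter.Eventually.of_forall fun ω => (hpos t ω).le), hEt t h0 h1]
  -- the key conditional-expectation identity, as a lintegral identity
  have hkey : ∀ t, 0 < t → t ≤ T → ∀ f : Ω → ℝ≥0∞, Measurable[ℱ t] f →
      ∫⁻ ω, ENNReal.ofReal (η t ω) * f ω ∂P = ∫⁻ ω, ENNReal.ofReal (η T ω) * f ω ∂P := by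
    intro t ht0 htT f hfm
    refine lintegral_mul_congr_of_setIntegral_eq' (ℱ.le t) P (hηm t) (hηm T)
      (hint t ht0.le htT) (hint T (ht0.le.trans htT) le_rfl)
      (Filter.Eventually.of_forall fun ω => (hpos t ω).le)
      (Filter.Eventually.of_forall fun ω => (hpos T ω).le) ?_ hfm
    intro A hA
    have h1 := setIntegral_condExp (ℱ.le t) (hint T (ht0.le.trans htT) le_rfl) hA
    have h2 : ∫ ω in A, (P[η T | ℱ t]) ω ∂P = ∫ ω in A, η t ω ∂P :=
      integral_congr_ae (ae_restrict_of_ae (hmart t T ht0.le htT le_rfl))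
    rw [← h2, h1]
  -- admissibility of the linear closure control
  have hadm : IsAdmissible ℱ P T ξ x u := by
    have hu_eq : u = fun _ _ => -(ξ / T) := funext fun t => funext fun ω => hudef t ω
    have hx_eq : x = fun t _ => ξ * (1 - t / T) := funext fun t => funext fun ω => hxdef t ω
    refine ⟨⟨?_, ?_, fun ω => ?_, fun ω t ht => ?_⟩, Filter.Eventually.of_forall fun ω => ?_⟩
    · rw [hu_eq]; exact progMeasurable_const ℱ _
    · rw [hx_eq]
      exact StronglyAdapted.progMeasurable_of_continuous (fun i => stronglyMeasurable_const)
        (fun ω => by fun_prop)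
    · simp only [hudef]
      exact integrableOn_const isCompact_Icc.measure_lt_top.ne
    · simp only [hudef, hxdef, intervalIntegral.integral_const, smul_eq_mul]
      field_simp
      ring
    · rw [hxdef, div_self hT.ne']
      ring
  -- the iterated integral of η
  have hηE_amP : AEMeasurable (fun z : Ω × ℝ => ENNReal.ofReal (η z.2 z.1))
      (P.prod (volume.restrict (Ioc (0 : ℝ) T))) :=
    ENNReal.measurable_ofReal.comp_aemeasurable (hηprog.aemeasurable_prod P)
  have hswapη : ∫⁻ ω, ∫⁻ t in Ioc (0 : ℝ) T, ENNReal.ofReal (η t ω) ∂volume ∂P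
      = ENNReal.ofReal R0 * ENNReal.ofReal T := by
    have e1 : ∫⁻ ω, ∫⁻ t in Ioc (0 : ℝ) T, ENNReal.ofReal (η t ω) ∂volume ∂P
        = ∫⁻ z : Ω × ℝ, ENNReal.ofReal (η z.2 z.1)
            ∂(P.prod (volume.restrict (Ioc (0 : ℝ) T))) :=
      (lintegral_prod _ hηE_amP).symm
    have e2 : ∫⁻ z : Ω × ℝ, ENNReal.ofReal (η z.2 z.1)
          ∂(P.prod (volume.restrict (Ioc (0 : ℝ) T)))
        = ∫⁻ t in Ioc (0 : ℝ) T, ∫⁻ ω, ENNReal.ofReal (η t ω) ∂P ∂volume :=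
      lintegral_prod_symm _ hηE_amP
    rw [e1, e2, setLIntegral_congr_fun_ae measurableSet_Ioc
        (Filter.Eventually.of_forall fun t ht => hlEt t ht.1.le ht.2),
      setLIntegral_const, Real.volume_Ioc, sub_zero]
  have hJval : R0 * T * ((|ξ| / T) ^ p) = |ξ| ^ p * R0 * T ^ (1 - p) := by
    rw [Real.div_rpow (abs_nonneg ξ) hT.le, Real.rpow_sub hT, Real.rpow_one]
    ring
  have hcostx : cost P T p η γ x u = ENNReal.ofReal (|ξ| ^ p * R0 * T ^ (1 - p)) := by
    have hc : ∀ t ω, ENNReal.ofReal (η t ω * |u t ω| ^ p + γ t ω * |x t ω| ^ p)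
        = ENNReal.ofReal (η t ω) * ENNReal.ofReal ((|ξ| / T) ^ p) := by
      intro t ω
      rw [hγ0, hudef, zero_mul, add_zero, abs_neg, abs_div, abs_of_pos hT,
        ENNReal.ofReal_mul (hpos t ω).le]
    simp only [cost, hc]
    have h1 : ∀ ω : Ω, ∫⁻ t in Ioc (0 : ℝ) T,
          ENNReal.ofReal (η t ω) * ENNReal.ofReal ((|ξ| / T) ^ p) ∂volume
        = (∫⁻ t in Ioc (0 : ℝ) T, ENNReal.ofReal (η t ω) ∂volume)
            * ENNReal.ofReal ((|ξ| / T) ^ p) :=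
      fun ω => lintegral_mul_const' _ _ ENNReal.ofReal_ne_top
    simp only [h1]
    rw [lintegral_mul_const' _ _ ENNReal.ofReal_ne_top, hswapη,
      ← ENNReal.ofReal_mul hR0nn, ← ENNReal.ofReal_mul (mul_nonneg hR0nn hT.le), hJval]
  refine ⟨hadm, ?_, hcostx⟩
  -- optimality
  intro y w hyw
  obtain ⟨⟨hwprog, hyprog, hwint, hydef⟩, hyT⟩ := hyw
  set μt : Measure ℝ := volume.restrict (Ioc (0 : ℝ) T) with hμt
  set ρ : Measure (Ω × ℝ) := P.prod μt with hρdef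
  have hw_am : AEMeasurable (fun z : Ω × ℝ => w z.2 z.1) ρ := hwprog.aemeasurable_prod P
  have hη_am : AEMeasurable (fun z : Ω × ℝ => η z.2 z.1) ρ := hηprog.aemeasurable_prod P
  have hηE_am : AEMeasurable (fun z : Ω × ℝ => ENNReal.ofReal (η z.2 z.1)) ρ :=
    ENNReal.measurable_ofReal.comp_aemeasurable hη_am
  have hwabs_am : AEMeasurable (fun z : Ω × ℝ => |w z.2 z.1|) ρ :=
    measurable_abs.comp_aemeasurable hw_am
  have hG_am : AEMeasurable (fun z : Ω × ℝ => η z.2 z.1 * |w z.2 z.1| ^ p) ρ :=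
    hη_am.mul (hwabs_am.pow aemeasurable_const)
  have hcosty : cost P T p η γ y w
      = ∫⁻ z, ENNReal.ofReal (η z.2 z.1 * |w z.2 z.1| ^ p) ∂ρ := by
    simp only [cost, hγ0, zero_mul, add_zero]
    exact (lintegral_prod _ (ENNReal.measurable_ofReal.comp_aemeasurable hG_am)).symm
  rcases eq_or_ne (cost P T p η γ y w) ⊤ with htop | hfin
  · rw [htop]; exact le_top
  -- ∫⁻ η over the product is finite
  have hηρ : ∫⁻ z, ENNReal.ofReal (η z.2 z.1) ∂ρ = ENNReal.ofReal R0 * ENNReal.ofReal T :=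
    (lintegral_prod _ hηE_am).trans hswapη
  -- Hölder: η·|w| is ρ-integrable
  have hηwfin : ∫⁻ z, ENNReal.ofReal (η z.2 z.1 * |w z.2 z.1|) ∂ρ < ⊤ := by
    set f : Ω × ℝ → ℝ≥0∞ :=
      fun z => ENNReal.ofReal (η z.2 z.1) ^ p⁻¹ * ENNReal.ofReal |w z.2 z.1| with hfdef
    set g : Ω × ℝ → ℝ≥0∞ := fun z => ENNReal.ofReal (η z.2 z.1) ^ q⁻¹ with hgdef
    have hηne : ∀ z : Ω × ℝ, ENNReal.ofReal (η z.2 z.1) ≠ 0 := fun z => by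
      simp [ENNReal.ofReal_eq_zero, not_le, hpos z.2 z.1]
    have hfg : ∀ z, ENNReal.ofReal (η z.2 z.1 * |w z.2 z.1|) = f z * g z := by
      intro z
      rw [hfdef, hgdef, ENNReal.ofReal_mul (hpos z.2 z.1).le]
      rw [mul_right_comm, ← ENNReal.rpow_add _ _ (hηne z) ENNReal.ofReal_ne_top,
        hpq.inv_add_inv_eq_one, ENNReal.rpow_one]
    have hfp : ∀ z, f z ^ p
        = ENNReal.ofReal (η z.2 z.1) * ENNReal.ofReal (|w z.2 z.1| ^ p) := by
      intro z
      rw [hfdef, ENNReal.mul_rpow_of_nonneg _ _ hp0.le, ← ENNReal.rpow_mul,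
        inv_mul_cancel₀ hp0.ne', ENNReal.rpow_one,
        ENNReal.ofReal_rpow_of_nonneg (abs_nonneg _) hp0.le]
    have hgq : ∀ z, g z ^ q = ENNReal.ofReal (η z.2 z.1) := by
      intro z
      rw [hgdef, ← ENNReal.rpow_mul, inv_mul_cancel₀ hpq.symm.ne_zero, ENNReal.rpow_one]
    have hfm : AEMeasurable f ρ := (hηE_am.pow aemeasurable_const).mul
      (ENNReal.measurable_ofReal.comp_aemeasurable hwabs_am)
    have hgm : AEMeasurable g ρ := hηE_am.pow aemeasurable_const
    have hH := ENNReal.lintegral_mul_le_Lp_mul_Lq ρ hpq hfm hgm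
    calc ∫⁻ z, ENNReal.ofReal (η z.2 z.1 * |w z.2 z.1|) ∂ρ
        = ∫⁻ z, f z * g z ∂ρ := lintegral_congr fun z => hfg z
      _ ≤ (∫⁻ z, f z ^ p ∂ρ) ^ (1 / p) * (∫⁻ z, g z ^ q ∂ρ) ^ (1 / q) := hH
      _ < ⊤ := by
          have h1 : ∫⁻ z, f z ^ p ∂ρ = cost P T p η γ y w := by
            rw [hcosty]
            refine lintegral_congr fun z => ?_
            rw [hfp z, ← ENNReal.ofReal_mul (hpos z.2 z.1).le]
          have h2 : ∫⁻ z, g z ^ q ∂ρ = ENNReal.ofReal R0 * ENNReal.ofReal T := by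
            rw [← hηρ]
            exact lintegral_congr fun z => hgq z
          rw [h1, h2]
          exact ENNReal.mul_lt_top
            (ENNReal.rpow_lt_top_of_nonneg hpq.one_div_nonneg hfin)
            (ENNReal.rpow_lt_top_of_nonneg hpq.symm.one_div_nonneg
              (ENNReal.mul_ne_top ENNReal.ofReal_ne_top ENNReal.ofReal_ne_top))
  -- iterated-integral identity via the martingale property
  have hswap_pos : ∀ v : ℝ → Ω → ℝ, ProgMeasurable ℱ v →
      ∫⁻ z, ENNReal.ofReal (η z.2 z.1) * ENNReal.ofReal (v z.2 z.1) ∂ρ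
        = ∫⁻ ω, ENNReal.ofReal (η T ω)
            * ∫⁻ t in Ioc (0 : ℝ) T, ENNReal.ofReal (v t ω) ∂volume ∂P := by
    intro v hv
    have hv_am : AEMeasurable (fun z : Ω × ℝ => v z.2 z.1) ρ := hv.aemeasurable_prod P
    have hF1 : AEMeasurable
        (fun z : Ω × ℝ => ENNReal.ofReal (η z.2 z.1) * ENNReal.ofReal (v z.2 z.1)) ρ :=
      hηE_am.mul (ENNReal.measurable_ofReal.comp_aemeasurable hv_am)
    have hF2 : AEMeasurable
        (fun z : Ω × ℝ => ENNReal.ofReal (η T z.1) * ENNReal.ofReal (v z.2 z.1)) ρ :=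
      (((hηm T).ennreal_ofReal.comp measurable_fst).aemeasurable).mul
        (ENNReal.measurable_ofReal.comp_aemeasurable hv_am)
    calc ∫⁻ z, ENNReal.ofReal (η z.2 z.1) * ENNReal.ofReal (v z.2 z.1) ∂ρ
        = ∫⁻ t in Ioc (0 : ℝ) T,
            ∫⁻ ω, ENNReal.ofReal (η t ω) * ENNReal.ofReal (v t ω) ∂P ∂volume :=
          lintegral_prod_symm _ hF1
      _ = ∫⁻ t in Ioc (0 : ℝ) T,
            ∫⁻ ω, ENNReal.ofReal (η T ω) * ENNReal.ofReal (v t ω) ∂P ∂volume :=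
          setLIntegral_congr_fun_ae measurableSet_Ioc
            (Filter.Eventually.of_forall fun t ht => hkey t ht.1 ht.2 _
              ((IsStronglyProgressive.stronglyAdapted hv t).measurable.ennreal_ofReal))
      _ = ∫⁻ z : Ω × ℝ, ENNReal.ofReal (η T z.1) * ENNReal.ofReal (v z.2 z.1) ∂ρ :=
          (lintegral_prod_symm _ hF2).symm
      _ = ∫⁻ ω, ∫⁻ t in Ioc (0 : ℝ) T,
            ENNReal.ofReal (η T ω) * ENNReal.ofReal (v t ω) ∂volume ∂P :=
          lintegral_prod _ hF2
      _ = ∫⁻ ω, ENNReal.ofReal (η T ω)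
            * ∫⁻ t in Ioc (0 : ℝ) T, ENNReal.ofReal (v t ω) ∂volume ∂P :=
          lintegral_congr fun ω => lintegral_const_mul' _ _ ENNReal.ofReal_ne_top
  -- the positive and negative weighted parts
  set Wp : Ω → ℝ≥0∞ :=
    fun ω => ∫⁻ t in Ioc (0 : ℝ) T, ENNReal.ofReal (w t ω) ∂volume with hWpdef
  set Wm : Ω → ℝ≥0∞ :=
    fun ω => ∫⁻ t in Ioc (0 : ℝ) T, ENNReal.ofReal (-(w t ω)) ∂volume with hWmdef
  set Ip : ℝ≥0∞ := ∫⁻ ω, ENNReal.ofReal (η T ω) * Wp ω ∂P with hIpdef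
  set Im : ℝ≥0∞ := ∫⁻ ω, ENNReal.ofReal (η T ω) * Wm ω ∂P with hImdef
  have hwm : ProgMeasurable ℱ (fun t ω => -(w t ω)) := fun i => (hwprog i).neg
  have hIp_eq : ∫⁻ z, ENNReal.ofReal (η z.2 z.1) * ENNReal.ofReal (w z.2 z.1) ∂ρ = Ip :=
    hswap_pos w hwprog
  have hIm_eq : ∫⁻ z, ENNReal.ofReal (η z.2 z.1) * ENNReal.ofReal (-(w z.2 z.1)) ∂ρ = Im :=
    hswap_pos (fun t ω => -(w t ω)) hwm
  have hmulle : ∀ a b : ℝ, 0 < a → ENNReal.ofReal a * ENNReal.ofReal b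
      ≤ ENNReal.ofReal (a * |b|) := by
    intro a b h
    rw [ENNReal.ofReal_mul h.le]
    exact mul_le_mul_right (ENNReal.ofReal_le_ofReal (le_abs_self b)) _
  have hIpfin : Ip < ⊤ := by
    rw [← hIp_eq]
    exact lt_of_le_of_lt (lintegral_mono fun z => hmulle _ _ (hpos z.2 z.1)) hηwfin
  have hImfin : Im < ⊤ := by
    rw [← hIm_eq]
    refine lt_of_le_of_lt (lintegral_mono fun z => ?_) hηwfin
    simpa using hmulle (η z.2 z.1) (-(w z.2 z.1)) (hpos z.2 z.1)
  -- measurability of Wp, Wm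
  have hWp_m : Measurable Wp := by
    have he : Wp = fun ω => ∫⁻ t, ENNReal.ofReal (w (min t T) ω) ∂μt := by
      funext ω
      exact setLIntegral_congr_fun_ae measurableSet_Ioc
        (Filter.Eventually.of_forall fun t ht => by rw [min_eq_left ht.2])
    rw [he]
    exact Measurable.lintegral_prod_right ((hwprog.measurable_min T).ennreal_ofReal)
  have hWm_m : Measurable Wm := by
    have he : Wm = fun ω => ∫⁻ t, ENNReal.ofReal (-(w (min t T) ω)) ∂μt := by
      funext ω
      exact setLIntegral_congr_fun_ae measurableSet_Ioc
        (Filter.Eventually.of_forall fun t ht => by rw [min_eq_left ht.2])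
    rw [he]
    exact Measurable.lintegral_prod_right ((hwprog.measurable_min T).neg.ennreal_ofReal)
  have hFp_m : Measurable fun ω => ENNReal.ofReal (η T ω) * Wp ω :=
    (hηm T).ennreal_ofReal.mul hWp_m
  have hFm_m : Measurable fun ω => ENNReal.ofReal (η T ω) * Wm ω :=
    (hηm T).ennreal_ofReal.mul hWm_m
  -- pathwise integrability of w on (0, T]
  have hwIoc : ∀ ω, IntegrableOn (fun t => w t ω) (Ioc (0 : ℝ) T) volume :=
    fun ω => (hwint ω).mono_set Ioc_subset_Icc_self
  -- pathwise values of Wp, Wm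
  have hWp_val : ∀ ω, Wp ω = ENNReal.ofReal (∫ t in Ioc (0 : ℝ) T, max (w t ω) 0) := by
    intro ω
    have he : Wp ω = ∫⁻ t in Ioc (0 : ℝ) T, ENNReal.ofReal (max (w t ω) 0) ∂volume :=
      lintegral_congr fun t => (ofReal_max_zero _).symm
    exact he.trans (ofReal_integral_eq_lintegral_ofReal ((hwIoc ω).pos_part)
      (Filter.Eventually.of_forall fun t => le_max_right _ _)).symm
  have hWm_val : ∀ ω, Wm ω = ENNReal.ofReal (∫ t in Ioc (0 : ℝ) T, max (-(w t ω)) 0) := by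
    intro ω
    have he : Wm ω = ∫⁻ t in Ioc (0 : ℝ) T, ENNReal.ofReal (max (-(w t ω)) 0) ∂volume :=
      lintegral_congr fun t => (ofReal_max_zero _).symm
    exact he.trans (ofReal_integral_eq_lintegral_ofReal ((hwIoc ω).neg'.pos_part)
      (Filter.Eventually.of_forall fun t => le_max_right _ _)).symm
  -- orthogonality: ∫ η·w dρ = -ξ·R0
  have horth : ∫ z, η z.2 z.1 * w z.2 z.1 ∂ρ = -ξ * R0 := by
    have hsplit : ∀ z : Ω × ℝ, η z.2 z.1 * w z.2 z.1
        = η z.2 z.1 * max (w z.2 z.1) 0 - η z.2 z.1 * max (-(w z.2 z.1)) 0 := by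
      intro z
      rw [← mul_sub, max_zero_sub_max_neg_zero_eq_self]
    have hp_nn : ∀ z : Ω × ℝ, 0 ≤ η z.2 z.1 * max (w z.2 z.1) 0 :=
      fun z => mul_nonneg (hpos z.2 z.1).le (le_max_right _ _)
    have hm_nn : ∀ z : Ω × ℝ, 0 ≤ η z.2 z.1 * max (-(w z.2 z.1)) 0 :=
      fun z => mul_nonneg (hpos z.2 z.1).le (le_max_right _ _)
    have hmax_am : AEMeasurable (fun z : Ω × ℝ => η z.2 z.1 * max (w z.2 z.1) 0) ρ :=
      hη_am.mul (hw_am.max aemeasurable_const)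
    have hmaxm_am : AEMeasurable (fun z : Ω × ℝ => η z.2 z.1 * max (-(w z.2 z.1)) 0) ρ :=
      hη_am.mul (hw_am.neg.max aemeasurable_const)
    have hlp : ∫⁻ z, ENNReal.ofReal (η z.2 z.1 * max (w z.2 z.1) 0) ∂ρ = Ip := by
      rw [← hIp_eq]
      refine lintegral_congr fun z => ?_
      rw [ENNReal.ofReal_mul (hpos z.2 z.1).le, ofReal_max_zero]
    have hlm : ∫⁻ z, ENNReal.ofReal (η z.2 z.1 * max (-(w z.2 z.1)) 0) ∂ρ = Im := by
      rw [← hIm_eq]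
      refine lintegral_congr fun z => ?_
      rw [ENNReal.ofReal_mul (hpos z.2 z.1).le, ofReal_max_zero]
    have hip : Integrable (fun z : Ω × ℝ => η z.2 z.1 * max (w z.2 z.1) 0) ρ := by
      refine ⟨hmax_am.aestronglyMeasurable, ?_⟩
      rw [hasFiniteIntegral_iff_ofReal (Filter.Eventually.of_forall hp_nn)]
      exact lt_of_eq_of_lt hlp hIpfin
    have him : Integrable (fun z : Ω × ℝ => η z.2 z.1 * max (-(w z.2 z.1)) 0) ρ := by
      refine ⟨hmaxm_am.aestronglyMeasurable, ?_⟩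
      rw [hasFiniteIntegral_iff_ofReal (Filter.Eventually.of_forall hm_nn)]
      exact lt_of_eq_of_lt hlm hImfin
    have hintp : ∫ z, η z.2 z.1 * max (w z.2 z.1) 0 ∂ρ = Ip.toReal := by
      rw [integral_eq_lintegral_of_nonneg_ae (Filter.Eventually.of_forall hp_nn)
        hmax_am.aestronglyMeasurable]
      congr 1
    have hintm : ∫ z, η z.2 z.1 * max (-(w z.2 z.1)) 0 ∂ρ = Im.toReal := by
      rw [integral_eq_lintegral_of_nonneg_ae (Filter.Eventually.of_forall hm_nn)
        hmaxm_am.aestronglyMeasurable]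
      congr 1
    have hsub : ∫ z, η z.2 z.1 * w z.2 z.1 ∂ρ = Ip.toReal - Im.toReal := by
      rw [← hintp, ← hintm, ← integral_sub hip him]
      exact integral_congr_ae (Filter.Eventually.of_forall fun z => hsplit z)
    have hWp_lt : ∀ ω, Wp ω < ⊤ := fun ω => by
      rw [hWp_val ω]; exact ENNReal.ofReal_lt_top
    have hWm_lt : ∀ ω, Wm ω < ⊤ := fun ω => by
      rw [hWm_val ω]; exact ENNReal.ofReal_lt_top
    have hItp : Ip.toReal = ∫ ω, (ENNReal.ofReal (η T ω) * Wp ω).toReal ∂P :=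
      (integral_toReal hFp_m.aemeasurable
        (Filter.Eventually.of_forall fun ω =>
          ENNReal.mul_lt_top ENNReal.ofReal_lt_top (hWp_lt ω))).symm
    have hItm : Im.toReal = ∫ ω, (ENNReal.ofReal (η T ω) * Wm ω).toReal ∂P :=
      (integral_toReal hFm_m.aemeasurable
        (Filter.Eventually.of_forall fun ω =>
          ENNReal.mul_lt_top ENNReal.ofReal_lt_top (hWm_lt ω))).symm
    have hintFp : Integrable (fun ω => (ENNReal.ofReal (η T ω) * Wp ω).toReal) P :=
      integrable_toReal_of_lintegral_ne_top hFp_m.aemeasurable hIpfin.ne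
    have hintFm : Integrable (fun ω => (ENNReal.ofReal (η T ω) * Wm ω).toReal) P :=
      integrable_toReal_of_lintegral_ne_top hFm_m.aemeasurable hImfin.ne
    have hdiff : ∀ᵐ ω ∂P, (ENNReal.ofReal (η T ω) * Wp ω).toReal
        - (ENNReal.ofReal (η T ω) * Wm ω).toReal = η T ω * (-ξ) := by
      filter_upwards [hyT] with ω hω
      have h0 := hydef ω T ⟨hT.le, le_rfl⟩
      rw [hω] at h0
      have h2 : ∫ s in (0 : ℝ)..T, w s ω = ∫ t in Ioc (0 : ℝ) T, w t ω :=
        intervalIntegral.integral_of_le hT.le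
      have hinT : ∫ t in Ioc (0 : ℝ) T, w t ω = -ξ := by
        rw [← h2]; linarith
      have hsub2 : (∫ t in Ioc (0 : ℝ) T, max (w t ω) 0)
          - (∫ t in Ioc (0 : ℝ) T, max (-(w t ω)) 0) = -ξ := by
        rw [← integral_sub ((hwIoc ω).pos_part) ((hwIoc ω).neg'.pos_part)]
        simp only [max_zero_sub_max_neg_zero_eq_self]
        exact hinT
      have hnn1 : 0 ≤ ∫ t in Ioc (0 : ℝ) T, max (w t ω) 0 :=
        integral_nonneg fun t => le_max_right _ _
      have hnn2 : 0 ≤ ∫ t in Ioc (0 : ℝ) T, max (-(w t ω)) 0 :=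
        integral_nonneg fun t => le_max_right _ _
      rw [ENNReal.toReal_mul, ENNReal.toReal_mul, ENNReal.toReal_ofReal (hpos T ω).le,
        hWp_val ω, hWm_val ω, ENNReal.toReal_ofReal hnn1, ENNReal.toReal_ofReal hnn2,
        ← mul_sub, hsub2]
    rw [hsub, hItp, hItm, ← integral_sub hintFp hintFm, integral_congr_ae hdiff,
      integral_mul_const, hEt T hT.le le_rfl]
    ring
  -- integrability facts over ρ
  have hηnnρ : 0 ≤ᵐ[ρ] fun z : Ω × ℝ => η z.2 z.1 :=
    Filter.Eventually.of_forall fun z => (hpos z.2 z.1).le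
  have hE1int : Integrable (fun z : Ω × ℝ => η z.2 z.1) ρ := by
    refine ⟨hη_am.aestronglyMeasurable, (hasFiniteIntegral_iff_ofReal hηnnρ).2 ?_⟩
    exact lt_of_eq_of_lt hηρ
      (ENNReal.mul_lt_top ENNReal.ofReal_lt_top ENNReal.ofReal_lt_top)
  have hE1 : ∫ z, η z.2 z.1 ∂ρ = R0 * T := by
    rw [integral_eq_lintegral_of_nonneg_ae hηnnρ hη_am.aestronglyMeasurable]
    have he : ∫⁻ z, ENNReal.ofReal (η z.2 z.1) ∂ρ = ENNReal.ofReal (R0 * T) := by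
      rw [hηρ, ← ENNReal.ofReal_mul hR0nn]
    rw [he, ENNReal.toReal_ofReal (mul_nonneg hR0nn hT.le)]
  have hE2int : Integrable (fun z : Ω × ℝ => η z.2 z.1 * w z.2 z.1) ρ := by
    refine ⟨(hη_am.mul hw_am).aestronglyMeasurable, ?_⟩
    rw [hasFiniteIntegral_iff_norm]
    refine lt_of_le_of_lt (lintegral_mono fun z => ?_) hηwfin
    rw [Real.norm_eq_abs, abs_mul, abs_of_pos (hpos z.2 z.1)]
  have hGnn : 0 ≤ᵐ[ρ] fun z : Ω × ℝ => η z.2 z.1 * |w z.2 z.1| ^ p :=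
    Filter.Eventually.of_forall fun z =>
      mul_nonneg (hpos z.2 z.1).le (Real.rpow_nonneg (abs_nonneg _) _)
  have hGint : Integrable (fun z : Ω × ℝ => η z.2 z.1 * |w z.2 z.1| ^ p) ρ := by
    refine ⟨hG_am.aestronglyMeasurable, (hasFiniteIntegral_iff_ofReal hGnn).2 ?_⟩
    exact lt_of_eq_of_lt hcosty.symm hfin.lt_top
  -- the tangent-line lower bound
  set c : ℝ := -(ξ / T) with hcdef
  set K : ℝ := p * |c| ^ (p - 1) * Real.sign c with hKdef
  have hRHSeq : ∀ z : Ω × ℝ, η z.2 z.1 * (|c| ^ p + K * (w z.2 z.1 - c))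
      = (|c| ^ p - K * c) * η z.2 z.1 + K * (η z.2 z.1 * w z.2 z.1) := by
    intro z; ring
  have hRHSint : Integrable
      (fun z : Ω × ℝ => η z.2 z.1 * (|c| ^ p + K * (w z.2 z.1 - c))) ρ := by
    refine ((hE1int.const_mul (|c| ^ p - K * c)).add (hE2int.const_mul K)).congr ?_
    exact Filter.Eventually.of_forall fun z => (hRHSeq z).symm
  have hmono : (fun z : Ω × ℝ => η z.2 z.1 * (|c| ^ p + K * (w z.2 z.1 - c)))
      ≤ fun z : Ω × ℝ => η z.2 z.1 * |w z.2 z.1| ^ p := by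
    intro z
    refine mul_le_mul_of_nonneg_left ?_ (hpos z.2 z.1).le
    exact tangent_line_abs_rpow hpq c (w z.2 z.1)
  have hcT : -ξ = c * T := by
    rw [hcdef, neg_mul, div_mul_cancel₀ _ hT.ne']
  have hRHSval : ∫ z, η z.2 z.1 * (|c| ^ p + K * (w z.2 z.1 - c)) ∂ρ
      = |c| ^ p * R0 * T := by
    rw [integral_congr_ae (Filter.Eventually.of_forall fun z => hRHSeq z),
      integral_add (hE1int.const_mul _) (hE2int.const_mul _),
      integral_const_mul, integral_const_mul, hE1, horth, hcT]
    ring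
  have habsc : |c| = |ξ| / T := by
    rw [hcdef, abs_neg, abs_div, abs_of_pos hT]
  have hJc : |ξ| ^ p * R0 * T ^ (1 - p) = |c| ^ p * R0 * T := by
    rw [habsc, ← hJval]
    ring
  calc cost P T p η γ x u = ENNReal.ofReal (|c| ^ p * R0 * T) := by rw [hcostx, hJc]
    _ ≤ ENNReal.ofReal (∫ z, η z.2 z.1 * |w z.2 z.1| ^ p ∂ρ) := by
        refine ENNReal.ofReal_le_ofReal ?_
        rw [← hRHSval]
        exact integral_mono hRHSint hGint hmono
    _ = ∫⁻ z, ENNReal.ofReal (η z.2 z.1 * |w z.2 z.1| ^ p) ∂ρ :=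
        ofReal_integral_eq_lintegral_ofReal hGint hGnn
    _ = cost P T p η γ y w := hcosty.symm
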